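/- Let g^1, …, g^k ∈ ℝ^m be pairwise distinct vectors whose inner products with a fixed unit vector t all coincide, and consider the function F(w) = Max_h(⟨g^1,w⟩, …, ⟨g^k,w⟩), where Max_h is the sum of the h largest among its k arguments (1 ≤ h < k). Then F is convex on ℝ^m, and it is not affine in any neighborhood of t restricted to the affine tangent space t + t^⊥; in particular t cannot be a local maximum of F − c·⟨v, w⟩ on the sphere for generic linear corrections when the g^i have pairwise distinct projections onto t^⊥. -/

import Mathlib

/-- Let `F(w) = Max_h(⟨g¹,w⟩, …, ⟨gᵏ,w⟩)` be the sum of the `h` largest of the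
`k` linear forms `⟨gⁱ,·⟩` (`1 ≤ h < k`), where the `gⁱ` are pairwise distinct
and have equal inner products with a unit vector `t`. Then `F` is convex and
it is not affine in any neighborhood of `t` within the affine tangent space
`t + t^⊥`. -/
theorem maxh_convex_not_affine (m k h : ℕ) (hh : 1 ≤ h) (hhk : h < k)
    (g : Fin k → EuclideanSpace ℝ (Fin m)) (hg : Function.Injective g)
    (t : EuclideanSpace ℝ (Fin m)) (ht : ‖t‖ = 1)
    (heq : ∀ i j : Fin k, (inner ℝ (g i) t : ℝ) = inner ℝ (g j) t)
    (hne : ((Finset.univ : Finset (Fin k)).powersetCard h).Nonempty)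
    (F : EuclideanSpace ℝ (Fin m) → ℝ)
    (hF : ∀ w, F w = ((Finset.univ : Finset (Fin k)).powersetCard h).sup' hne
      (fun I => ∑ i ∈ I, (inner ℝ (g i) w : ℝ))) :
    ConvexOn ℝ Set.univ F ∧
      ∀ ε : ℝ, 0 < ε →
        ¬∃ (φ : (ℝ ∙ t)ᗮ →ₗ[ℝ] ℝ) (c : ℝ),
          ∀ v : (ℝ ∙ t)ᗮ, ‖v‖ < ε →
            F (t + (v : EuclideanSpace ℝ (Fin m))) = φ v + c := by
  constructor
  · refine ⟨convex_univ, ?_⟩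
    intro x _ y _ a b ha hb hab
    rw [hF, hF, hF]
    apply Finset.sup'_le
    intro I hI
    have : ∑ i ∈ I, (inner ℝ (g i) (a • x + b • y) : ℝ)
        = a * ∑ i ∈ I, (inner ℝ (g i) x : ℝ) + b * ∑ i ∈ I, (inner ℝ (g i) y : ℝ) := by
      simp only [inner_add_right, real_inner_smul_right, Finset.sum_add_distrib,
        Finset.mul_sum]
    rw [this, smul_eq_mul, smul_eq_mul]
    exact add_le_add
      (mul_le_mul_of_nonneg_left
        (Finset.le_sup' (fun I => ∑ i ∈ I, (inner ℝ (g i) x : ℝ)) hI) ha)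
      (mul_le_mul_of_nonneg_left
        (Finset.le_sup' (fun I => ∑ i ∈ I, (inner ℝ (g i) y : ℝ)) hI) hb)
  · intro ε hε ⟨φ, c, hφ⟩
    set α : ℝ := inner ℝ (g ⟨0, by omega⟩) t with hα
    have hαi : ∀ i : Fin k, (inner ℝ (g i) t : ℝ) = α := fun i => heq i _
    -- F t ≤ h * α
    have hFt : F t ≤ h * α := by
      rw [hF]
      apply Finset.sup'_le
      intro I hI
      rw [Finset.mem_powersetCard] at hI
      rw [Finset.sum_congr rfl (fun i _ => hαi i), Finset.sum_const, hI.2]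
      simp [mul_comm]
    -- pick i j distinct
    set i : Fin k := ⟨0, by omega⟩
    set j : Fin k := ⟨1, by omega⟩
    have hij : i ≠ j := by simp [i, j]
    set d : EuclideanSpace ℝ (Fin m) := g i - g j with hd
    have hdne : d ≠ 0 := sub_ne_zero.mpr (fun e => hij (hg e))
    have hdt : (inner ℝ t d : ℝ) = 0 := by
      rw [real_inner_comm, hd, inner_sub_left, hαi, hαi, sub_self]
    have hdnorm : (0:ℝ) < ‖d‖ := norm_pos_iff.mpr hdne
    set s : ℝ := ε / (2 * ‖d‖) with hs
    have hspos : 0 < s := by positivity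
    set v₀ : EuclideanSpace ℝ (Fin m) := s • d with hv₀
    have hv₀mem : v₀ ∈ (ℝ ∙ t)ᗮ := by
      rw [Submodule.mem_orthogonal_singleton_iff_inner_right]
      rw [real_inner_smul_right, hdt, mul_zero]
    set v : (ℝ ∙ t)ᗮ := ⟨v₀, hv₀mem⟩ with hv
    have hvnorm : ‖v‖ < ε := by
      have h1 : ‖v‖ = ‖v₀‖ := rfl
      have h2 : ‖v₀‖ = ε / 2 := by
        rw [hv₀, norm_smul, Real.norm_eq_abs, abs_of_pos hspos, hs]
        field_simp
      rw [h1, h2]; linarith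
    -- index sets
    obtain ⟨S, hS, hScard⟩ := Finset.exists_subset_card_eq
      (s := (Finset.univ : Finset (Fin k)) \ {i, j}) (n := h - 1) (by
        rw [Finset.card_sdiff_of_subset (Finset.subset_univ _)]
        simp only [Finset.card_univ, Fintype.card_fin]
        rw [Finset.card_insert_of_notMem (by simp [hij]), Finset.card_singleton]
        omega)
    have hiS : i ∉ S := by
      intro hmem; have := hS hmem
      rw [Finset.mem_sdiff] at this
      exact this.2 (by simp)
    have hjS : j ∉ S := by
      intro hmem; have := hS hmem
      rw [Finset.mem_sdiff] at this
      exact this.2 (by simp)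
    set I := insert i S with hI
    set J := insert j S with hJ
    have hImem : I ∈ (Finset.univ : Finset (Fin k)).powersetCard h := by
      rw [Finset.mem_powersetCard]
      exact ⟨Finset.subset_univ _, by rw [Finset.card_insert_of_notMem hiS, hScard]; omega⟩
    have hJmem : J ∈ (Finset.univ : Finset (Fin k)).powersetCard h := by
      rw [Finset.mem_powersetCard]
      exact ⟨Finset.subset_univ _, by rw [Finset.card_insert_of_notMem hjS, hScard]; omega⟩
    -- key inner product
    have hkey : (inner ℝ (g i) v₀ : ℝ) - inner ℝ (g j) v₀ = s * ‖d‖^2 := by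
      rw [← inner_sub_left, ← hd, hv₀, real_inner_smul_right, real_inner_self_eq_norm_sq]
    -- lower bounds
    have hsum : ∀ (K : Finset (Fin k)), K ∈ (Finset.univ : Finset (Fin k)).powersetCard h →
        ∀ w, ∑ i ∈ K, (inner ℝ (g i) (t + w) : ℝ)
          = h * α + ∑ i ∈ K, (inner ℝ (g i) w : ℝ) := by
      intro K hK w
      rw [Finset.mem_powersetCard] at hK
      simp only [inner_add_right, Finset.sum_add_distrib]
      congr 1
      rw [Finset.sum_congr rfl (fun i _ => hαi i), Finset.sum_const, hK.2]
      simp [mul_comm]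
    have h1 : h * α + ∑ i ∈ I, (inner ℝ (g i) v₀ : ℝ) ≤ F (t + v₀) := by
      rw [hF, ← hsum I hImem v₀]
      exact Finset.le_sup' (fun K => ∑ i ∈ K, (inner ℝ (g i) (t + v₀) : ℝ)) hImem
    have h2 : h * α + ∑ i ∈ J, (inner ℝ (g i) (-v₀) : ℝ) ≤ F (t + (-v₀)) := by
      rw [hF, ← hsum J hJmem (-v₀)]
      exact Finset.le_sup' (fun K => ∑ i ∈ K, (inner ℝ (g i) (t + (-v₀)) : ℝ)) hJmem
    -- affine evaluations
    have e0 : F t = c := by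
      have := hφ 0 (by simpa using hε)
      simpa using this
    have e1 : F (t + v₀) = φ v + c := hφ v hvnorm
    have e2 : F (t + (-v₀)) = -φ v + c := by
      have := hφ (-v) (by rwa [norm_neg])
      simpa using this
    -- combine
    have hsumIJ : ∑ i ∈ I, (inner ℝ (g i) v₀ : ℝ) + ∑ i ∈ J, (inner ℝ (g i) (-v₀) : ℝ)
        = s * ‖d‖^2 := by
      rw [hI, hJ, Finset.sum_insert hiS, Finset.sum_insert hjS]
      simp only [inner_neg_right, Finset.sum_neg_distrib]
      linarith [hkey]
    have hkey2 : 2 * c ≥ 2 * ((h : ℝ) * α) + s * ‖d‖^2 := by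
      have h3 := add_le_add h1 h2
      rw [e1, e2] at h3
      linarith [hsumIJ]
    have hc : c ≤ (h : ℝ) * α := e0 ▸ hFt
    nlinarith [mul_pos hspos (pow_pos hdnorm 2)]
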